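/- There exists a continuously differentiable map u : ℝ → ℝ² such that u′(τ) = F₁(u(τ)) for all τ ∈ ℝ, lim_{τ→−∞} u(τ) = (4/3, 2/3) = SM₂, lim_{τ→+∞} u(τ) = (0, 1) = M₂, and u(τ) ∉ {(4/3, 2/3), (0, 1)} for every τ. That is, the order n = 1 STV ODE possesses a heteroclinic orbit connecting the critical Friedmann rest point SM₂ to the Minkowski rest point M₂ (the underdense branch of the unstable manifold of SM₂, realized by the k < 0 Friedmann spacetimes). -/

import Mathlib

open Filter

/-- The vector field of the order `n = 1` STV ODE. -/
noncomputable def F1 (p : ℝ × ℝ) : ℝ × ℝ :=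
  (2 * p.1 - 3 * p.1 * p.2, -(1 / 6) * p.1 + p.2 - p.2 ^ 2)

/-! ### Auxiliary development

We construct the heteroclinic orbit explicitly from the `k < 0` (hyperbolic) dust
Friedmann spacetime, given parametrically by
`t = sinh η - η`, `z₂ = 6 (sinh η - η)² / (cosh η - 1)³`,
`w₀ = (sinh η - η) sinh η / (cosh η - 1)²`, with `τ = log t`. -/

noncomputable def Pfun (x : ℝ) : ℝ := Real.sinh x - x

lemma Pfun_strictMono : StrictMono Pfun := Real.sinh_sub_id_strictMono

lemma Pfun_hasDerivAt (x : ℝ) : HasDerivAt Pfun (Real.cosh x - 1) x :=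
  (Real.hasDerivAt_sinh x).sub (hasDerivAt_id x)

lemma Pfun_continuous : Continuous Pfun := Real.continuous_sinh.sub continuous_id

lemma sinh_big {x : ℝ} (hx : 12 ≤ x) : 2 * x ≤ Real.sinh x := by
  have h1 : 1 + x / 2 ≤ Real.exp (x / 2) := by
    have := Real.add_one_le_exp (x / 2); linarith
  have h2 : (1 + x / 2) ^ 2 ≤ Real.exp x := by
    have hpos : (0:ℝ) ≤ 1 + x / 2 := by linarith
    have := mul_self_le_mul_self hpos h1
    calc (1 + x / 2) ^ 2 = (1 + x / 2) * (1 + x / 2) := by ring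
      _ ≤ Real.exp (x / 2) * Real.exp (x / 2) := this
      _ = Real.exp x := by rw [← Real.exp_add]; ring_nf
  have h3 : Real.exp (-x) ≤ 1 := Real.exp_le_one_iff.mpr (by linarith)
  rw [Real.sinh_eq]
  nlinarith

lemma Pfun_tendsto_atTop : Tendsto Pfun atTop atTop := by
  apply tendsto_atTop_mono' atTop (f₁ := fun x : ℝ => x) _ tendsto_id
  filter_upwards [eventually_ge_atTop (12:ℝ)] with x hx
  have := sinh_big hx
  simp only [Pfun]; linarith

lemma Pfun_tendsto_atBot : Tendsto Pfun atBot atBot := by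
  apply tendsto_atBot_mono' atBot (f₁ := fun x : ℝ => x) _ tendsto_id
  filter_upwards [eventually_le_atBot (-12:ℝ)] with x hx
  have h := sinh_big (x := -x) (by linarith)
  simp only [Pfun]
  have : Real.sinh x = - Real.sinh (-x) := by rw [Real.sinh_neg]; ring
  linarith

lemma Pfun_surjective : Function.Surjective Pfun :=
  Pfun_continuous.surjective Pfun_tendsto_atTop Pfun_tendsto_atBot

/-- The inverse of `η ↦ sinh η - η` as an order isomorphism of `ℝ`. -/
noncomputable def Phi : ℝ ≃o ℝ :=
  StrictMono.orderIsoOfSurjective Pfun Pfun_strictMono Pfun_surjective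

lemma Pfun_Phi_symm (y : ℝ) : Pfun (Phi.symm y) = y := Phi.apply_symm_apply y

lemma Phi_symm_zero : Phi.symm 0 = 0 := by
  rw [OrderIso.symm_apply_eq]
  show (0:ℝ) = Pfun 0
  simp [Pfun]

lemma Phi_symm_pos {y : ℝ} (hy : 0 < y) : 0 < Phi.symm y := by
  rw [← Phi_symm_zero]
  exact Phi.symm.strictMono hy

lemma Phi_symm_continuous : Continuous (Phi.symm : ℝ → ℝ) := Phi.symm.continuous

lemma Phi_symm_hasDerivAt {y : ℝ} (hy : 0 < y) :
    HasDerivAt (fun z => (Phi.symm z : ℝ)) (Real.cosh (Phi.symm y) - 1)⁻¹ y := by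
  have hne : Real.cosh (Phi.symm y) - 1 ≠ 0 := by
    have h1 : Phi.symm y ≠ 0 := (Phi_symm_pos hy).ne'
    have := Real.one_lt_cosh.mpr h1
    linarith
  exact HasDerivAt.of_local_left_inverse Phi_symm_continuous.continuousAt
    (Pfun_hasDerivAt (Phi.symm y)) hne (Eventually.of_forall Pfun_Phi_symm)

/-- The parameter `η` as a function of `τ`: `sinh (etaf τ) - etaf τ = exp τ`. -/
noncomputable def etaf (τ : ℝ) : ℝ := Phi.symm (Real.exp τ)

lemma etaf_pos (τ : ℝ) : 0 < etaf τ := Phi_symm_pos (Real.exp_pos τ)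

lemma etaf_eq (τ : ℝ) : Real.sinh (etaf τ) - etaf τ = Real.exp τ := Pfun_Phi_symm _

lemma etaf_hasDerivAt (τ : ℝ) :
    HasDerivAt etaf ((Real.cosh (etaf τ) - 1)⁻¹ * Real.exp τ) τ :=
  (Phi_symm_hasDerivAt (Real.exp_pos τ)).comp τ (Real.hasDerivAt_exp τ)

lemma etaf_tendsto_atTop : Tendsto etaf atTop atTop := by
  have h : Tendsto (fun y => (Phi.symm y : ℝ)) atTop atTop := by
    rw [tendsto_atTop]
    intro b
    filter_upwards [eventually_ge_atTop (Pfun b)] with y hy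
    have := Phi.symm.monotone hy
    rwa [show Pfun b = Phi b from rfl, Phi.symm_apply_apply] at this
  exact h.comp Real.tendsto_exp_atTop

lemma etaf_tendsto_atBot : Tendsto etaf atBot (nhdsWithin 0 (Set.Ioi 0)) := by
  rw [tendsto_nhdsWithin_iff]
  constructor
  · have : Tendsto (fun y => (Phi.symm y : ℝ)) (nhds 0) (nhds 0) := by
      have := Phi_symm_continuous.continuousAt (x := (0:ℝ))
      rwa [ContinuousAt, Phi_symm_zero] at this
    exact this.comp Real.tendsto_exp_atBot
  · exact Eventually.of_forall fun τ => etaf_pos τ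

/-- First coordinate along the orbit, as a function of `η`. -/
noncomputable def Zf (x : ℝ) : ℝ := 6 * (Real.sinh x - x) ^ 2 / (Real.cosh x - 1) ^ 3

/-- Second coordinate along the orbit, as a function of `η`. -/
noncomputable def Wf (x : ℝ) : ℝ := (Real.sinh x - x) * Real.sinh x / (Real.cosh x - 1) ^ 2

lemma cosh_sub_one_pos {x : ℝ} (hx : x ≠ 0) : 0 < Real.cosh x - 1 := by
  have := Real.one_lt_cosh.mpr hx; linarith

lemma Zf_hasDerivAt {x : ℝ} (hx : 0 < x) :
    HasDerivAt Zf
      ((12 * (Real.sinh x - x) * (Real.cosh x - 1) * (Real.cosh x - 1) ^ 3 -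
        6 * (Real.sinh x - x) ^ 2 * (3 * (Real.cosh x - 1) ^ 2 * Real.sinh x)) /
        ((Real.cosh x - 1) ^ 3) ^ 2) x := by
  have hc := cosh_sub_one_pos hx.ne'
  have hnum : HasDerivAt (fun y => 6 * (Real.sinh y - y) ^ 2)
      (12 * (Real.sinh x - x) * (Real.cosh x - 1)) x := by
    have h := (((Real.hasDerivAt_sinh x).sub (hasDerivAt_id x)).fun_pow 2).const_mul (6:ℝ)
    refine h.congr_deriv ?_
    simp only [Pi.sub_apply, id_eq]; push_cast; ring
  have hden : HasDerivAt (fun y => (Real.cosh y - 1) ^ 3)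
      (3 * (Real.cosh x - 1) ^ 2 * Real.sinh x) x := by
    have h := ((Real.hasDerivAt_cosh x).sub_const 1).fun_pow 3
    refine h.congr_deriv ?_; push_cast; ring
  exact hnum.div hden (by positivity)

lemma Wf_hasDerivAt {x : ℝ} (hx : 0 < x) :
    HasDerivAt Wf
      ((((Real.cosh x - 1) * Real.sinh x + (Real.sinh x - x) * Real.cosh x) *
          (Real.cosh x - 1) ^ 2 -
        (Real.sinh x - x) * Real.sinh x * (2 * (Real.cosh x - 1) * Real.sinh x)) /
        ((Real.cosh x - 1) ^ 2) ^ 2) x := by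
  have hc := cosh_sub_one_pos hx.ne'
  have hnum : HasDerivAt (fun y => (Real.sinh y - y) * Real.sinh y)
      ((Real.cosh x - 1) * Real.sinh x + (Real.sinh x - x) * Real.cosh x) x :=
    ((Real.hasDerivAt_sinh x).sub (hasDerivAt_id x)).mul (Real.hasDerivAt_sinh x)
  have hden : HasDerivAt (fun y => (Real.cosh y - 1) ^ 2)
      (2 * (Real.cosh x - 1) * Real.sinh x) x := by
    have h := ((Real.hasDerivAt_cosh x).sub_const 1).fun_pow 2
    refine h.congr_deriv ?_; push_cast; ring
  exact hnum.div hden (by positivity)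

lemma exp_form {x : ℝ} :
    Real.sinh x = (Real.exp x - (Real.exp x)⁻¹) / 2 ∧
    Real.cosh x = (Real.exp x + (Real.exp x)⁻¹) / 2 := by
  constructor
  · rw [Real.sinh_eq, Real.exp_neg]
  · rw [Real.cosh_eq, Real.exp_neg]

lemma exp_ne_one_of_pos {x : ℝ} (hx : 0 < x) : Real.exp x ≠ 1 := by
  have : (1:ℝ) < Real.exp x := by
    have := Real.add_one_le_exp x; linarith
  exact this.ne'


/-! ### Limits as `η → 0⁺` (via L'Hôpital) -/

lemma limA : Tendsto (fun x => (4 * (Real.cosh x - 1)) /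
    (Real.sinh x * Real.sinh x + (Real.cosh x - 1) * Real.cosh x))
    (nhdsWithin 0 (Set.Ioi 0)) (nhds (4 / 3)) := by
  have h1 : Tendsto (fun x => 4 / (2 * Real.cosh x + 1)) (nhdsWithin 0 (Set.Ioi 0))
      (nhds (4 / 3)) := by
    have hc : Tendsto (fun x => 4 / (2 * Real.cosh x + 1)) (nhds 0) (nhds (4 / 3)) := by
      have : ContinuousAt (fun x => 4 / (2 * Real.cosh x + 1)) 0 := by
        apply ContinuousAt.div continuousAt_const
        · fun_prop
        · simp [Real.cosh_zero]; norm_num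
      have h0 := this.tendsto
      norm_num [Real.cosh_zero] at h0
      exact h0
    exact hc.mono_left nhdsWithin_le_nhds
  refine h1.congr' ?_
  filter_upwards [self_mem_nhdsWithin] with x (hx : 0 < x)
  have hc := cosh_sub_one_pos hx.ne'
  have hsq := Real.sinh_sq x
  have hd1 : 2 * Real.cosh x + 1 ≠ 0 := by nlinarith
  have hd2 : Real.sinh x * Real.sinh x + (Real.cosh x - 1) * Real.cosh x ≠ 0 := by nlinarith
  field_simp
  nlinarith [hsq]

lemma limB : Tendsto (fun x => 4 * (Real.sinh x - x) / ((Real.cosh x - 1) * Real.sinh x))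
    (nhdsWithin 0 (Set.Ioi 0)) (nhds (4 / 3)) := by
  apply HasDerivAt.lhopital_zero_nhdsGT
    (f' := fun x => 4 * (Real.cosh x - 1))
    (g' := fun x => Real.sinh x * Real.sinh x + (Real.cosh x - 1) * Real.cosh x)
  · refine Eventually.of_forall fun x => ?_
    have h := ((Real.hasDerivAt_sinh x).sub (hasDerivAt_id x)).const_mul (4:ℝ)
    refine h.congr_deriv ?_; simp only [Pi.sub_apply, id_eq]
  · refine Eventually.of_forall fun x => ?_
    exact ((Real.hasDerivAt_cosh x).sub_const 1).mul (Real.hasDerivAt_sinh x)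
  · filter_upwards [self_mem_nhdsWithin] with x (hx : 0 < x)
    have hc := cosh_sub_one_pos hx.ne'
    have hs := Real.sinh_pos_iff.mpr hx
    nlinarith
  · have : Tendsto (fun x => 4 * (Real.sinh x - x)) (nhds 0) (nhds 0) := by
      have : Continuous fun x => 4 * (Real.sinh x - x) := by fun_prop
      simpa using this.tendsto 0
    exact this.mono_left nhdsWithin_le_nhds
  · have : Tendsto (fun x => (Real.cosh x - 1) * Real.sinh x) (nhds 0) (nhds 0) := by
      have : Continuous fun x => (Real.cosh x - 1) * Real.sinh x := by fun_prop
      simpa using this.tendsto 0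
    exact this.mono_left nhdsWithin_le_nhds
  · exact limA

lemma limZ0 : Tendsto Zf (nhdsWithin 0 (Set.Ioi 0)) (nhds (4 / 3)) := by
  have main : Tendsto (fun x => 6 * (Real.sinh x - x) ^ 2 / (Real.cosh x - 1) ^ 3)
      (nhdsWithin 0 (Set.Ioi 0)) (nhds (4 / 3)) := by
    apply HasDerivAt.lhopital_zero_nhdsGT
      (f' := fun x => 12 * (Real.sinh x - x) * (Real.cosh x - 1))
      (g' := fun x => 3 * (Real.cosh x - 1) ^ 2 * Real.sinh x)
    · refine Eventually.of_forall fun x => ?_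
      have h := (((Real.hasDerivAt_sinh x).sub (hasDerivAt_id x)).fun_pow 2).const_mul (6:ℝ)
      refine h.congr_deriv ?_; simp only [Pi.sub_apply, id_eq]; push_cast; ring
    · refine Eventually.of_forall fun x => ?_
      have h := ((Real.hasDerivAt_cosh x).sub_const 1).fun_pow 3
      refine h.congr_deriv ?_; push_cast; ring
    · filter_upwards [self_mem_nhdsWithin] with x (hx : 0 < x)
      have hc := cosh_sub_one_pos hx.ne'
      have hs := Real.sinh_pos_iff.mpr hx
      positivity
    · have : Tendsto (fun x => 6 * (Real.sinh x - x) ^ 2) (nhds 0) (nhds 0) := by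
        have : Continuous fun x => 6 * (Real.sinh x - x) ^ 2 := by fun_prop
        simpa using this.tendsto 0
      exact this.mono_left nhdsWithin_le_nhds
    · have : Tendsto (fun x => (Real.cosh x - 1) ^ 3) (nhds 0) (nhds 0) := by
        have : Continuous fun x => (Real.cosh x - 1) ^ 3 := by fun_prop
        simpa using this.tendsto 0
      exact this.mono_left nhdsWithin_le_nhds
    · refine limB.congr' ?_
      filter_upwards [self_mem_nhdsWithin] with x (hx : 0 < x)
      have hc := cosh_sub_one_pos hx.ne'
      have hs := Real.sinh_pos_iff.mpr hx
      field_simp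
      ring
  exact main

lemma limW0 : Tendsto Wf (nhdsWithin 0 (Set.Ioi 0)) (nhds (2 / 3)) := by
  have main : Tendsto (fun x => (Real.sinh x - x) * Real.sinh x / (Real.cosh x - 1) ^ 2)
      (nhdsWithin 0 (Set.Ioi 0)) (nhds (2 / 3)) := by
    apply HasDerivAt.lhopital_zero_nhdsGT
      (f' := fun x => (Real.cosh x - 1) * Real.sinh x + (Real.sinh x - x) * Real.cosh x)
      (g' := fun x => 2 * (Real.cosh x - 1) * Real.sinh x)
    · refine Eventually.of_forall fun x => ?_
      exact ((Real.hasDerivAt_sinh x).sub (hasDerivAt_id x)).mul (Real.hasDerivAt_sinh x)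
    · refine Eventually.of_forall fun x => ?_
      have h := ((Real.hasDerivAt_cosh x).sub_const 1).fun_pow 2
      refine h.congr_deriv ?_; push_cast; ring
    · filter_upwards [self_mem_nhdsWithin] with x (hx : 0 < x)
      have hc := cosh_sub_one_pos hx.ne'
      have hs := Real.sinh_pos_iff.mpr hx
      positivity
    · have : Tendsto (fun x => (Real.sinh x - x) * Real.sinh x) (nhds 0) (nhds 0) := by
        have : Continuous fun x => (Real.sinh x - x) * Real.sinh x := by fun_prop
        simpa using this.tendsto 0
      exact this.mono_left nhdsWithin_le_nhds
    · have : Tendsto (fun x => (Real.cosh x - 1) ^ 2) (nhds 0) (nhds 0) := by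
        have : Continuous fun x => (Real.cosh x - 1) ^ 2 := by fun_prop
        simpa using this.tendsto 0
      exact this.mono_left nhdsWithin_le_nhds
    · -- f'/g' = 1/2 + (cosh x / 8) * (4 (sinh x - x) / ((cosh x - 1) sinh x))
      have haux : Tendsto (fun x => 1 / 2 + Real.cosh x / 8 *
          (4 * (Real.sinh x - x) / ((Real.cosh x - 1) * Real.sinh x)))
          (nhdsWithin 0 (Set.Ioi 0)) (nhds (2 / 3)) := by
        have hcos : Tendsto (fun x => Real.cosh x / 8) (nhdsWithin 0 (Set.Ioi 0))
            (nhds (1 / 8)) := by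
          have : ContinuousAt (fun x => Real.cosh x / 8) 0 := by fun_prop
          have h0 := this.tendsto
          simp only [Real.cosh_zero] at h0
          exact h0.mono_left nhdsWithin_le_nhds
        have h2 := (tendsto_const_nhds (x := (1/2 : ℝ))).add (hcos.mul limB)
        convert h2 using 2
        norm_num
      refine haux.congr' ?_
      filter_upwards [self_mem_nhdsWithin] with x (hx : 0 < x)
      have hc := cosh_sub_one_pos hx.ne'
      have hs := Real.sinh_pos_iff.mpr hx
      field_simp
      ring
  exact main



lemma algtop1 (E t : ℝ) (hE : 0 < E) (h1 : E ≠ 1) :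
    12 * E⁻¹ * (1 - E⁻¹ ^ 2 - 2 * (t * E⁻¹)) ^ 2 / (1 - E⁻¹) ^ 6 =
      6 * ((E - E⁻¹) / 2 - t) ^ 2 / ((E + E⁻¹) / 2 - 1) ^ 3 := by
  have hE0 : E ≠ 0 := hE.ne'
  have h4 : E - 1 ≠ 0 := sub_ne_zero.2 h1
  have h2 : (E + E⁻¹) / 2 - 1 = (E - 1) ^ 2 / (2 * E) := by field_simp; ring
  have h3 : 1 - E⁻¹ = (E - 1) / E := by field_simp
  rw [h2, h3]
  field_simp
  ring

lemma algtop2 (E t : ℝ) (hE : 0 < E) (h1 : E ≠ 1) :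
    (1 - E⁻¹ ^ 2 - 2 * (t * E⁻¹)) * (1 - E⁻¹ ^ 2) / (1 - E⁻¹) ^ 4 =
      ((E - E⁻¹) / 2 - t) * ((E - E⁻¹) / 2) / ((E + E⁻¹) / 2 - 1) ^ 2 := by
  have hE0 : E ≠ 0 := hE.ne'
  have h4 : E - 1 ≠ 0 := sub_ne_zero.2 h1
  have h2 : (E + E⁻¹) / 2 - 1 = (E - 1) ^ 2 / (2 * E) := by field_simp; ring
  have h3 : 1 - E⁻¹ = (E - 1) / E := by field_simp
  rw [h2, h3]
  field_simp

/-! ### Limits as `η → +∞` -/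

lemma limZtop : Tendsto Zf atTop (nhds 0) := by
  have hq : Tendsto (fun x : ℝ => Real.exp (-x)) atTop (nhds 0) :=
    Real.tendsto_exp_neg_atTop_nhds_zero
  have hxq : Tendsto (fun x : ℝ => x * Real.exp (-x)) atTop (nhds 0) := by
    simpa using Real.tendsto_pow_mul_exp_neg_atTop_nhds_zero 1
  have haux : Tendsto (fun x : ℝ =>
      12 * Real.exp (-x) * (1 - Real.exp (-x) ^ 2 - 2 * (x * Real.exp (-x))) ^ 2 /
        (1 - Real.exp (-x)) ^ 6) atTop (nhds 0) := by
    have h1 : Tendsto (fun x : ℝ =>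
        12 * Real.exp (-x) * (1 - Real.exp (-x) ^ 2 - 2 * (x * Real.exp (-x))) ^ 2)
        atTop (nhds 0) := by
      have := (hq.const_mul 12).mul
        ((((tendsto_const_nhds (x := (1:ℝ))).sub (hq.pow 2)).sub (hxq.const_mul 2)).pow 2)
      simpa using this
    have h2 : Tendsto (fun x : ℝ => (1 - Real.exp (-x)) ^ 6) atTop (nhds 1) := by
      have := ((tendsto_const_nhds (x := (1:ℝ))).sub hq).pow 6
      simpa using this
    have := h1.div h2 (by norm_num)
    rw [zero_div] at this; exact this
  refine haux.congr' ?_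
  filter_upwards [eventually_gt_atTop (0:ℝ)] with x hx
  have hq0 : 0 < Real.exp (-x) := Real.exp_pos _
  have hq1 : Real.exp (-x) < 1 := by
    rw [Real.exp_lt_one_iff]; linarith
  have hE : Real.exp x ≠ 0 := (Real.exp_pos x).ne'
  have hrec : Real.exp (-x) = (Real.exp x)⁻¹ := Real.exp_neg x
  have hc := cosh_sub_one_pos hx.ne'
  show 12 * Real.exp (-x) * (1 - Real.exp (-x) ^ 2 - 2 * (x * Real.exp (-x))) ^ 2 /
        (1 - Real.exp (-x)) ^ 6 = Zf x
  rw [Zf, Real.sinh_eq, Real.cosh_eq, hrec]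
  exact algtop1 (Real.exp x) x (Real.exp_pos x) (exp_ne_one_of_pos hx)

lemma limWtop : Tendsto Wf atTop (nhds 1) := by
  have hq : Tendsto (fun x : ℝ => Real.exp (-x)) atTop (nhds 0) :=
    Real.tendsto_exp_neg_atTop_nhds_zero
  have hxq : Tendsto (fun x : ℝ => x * Real.exp (-x)) atTop (nhds 0) := by
    simpa using Real.tendsto_pow_mul_exp_neg_atTop_nhds_zero 1
  have haux : Tendsto (fun x : ℝ =>
      (1 - Real.exp (-x) ^ 2 - 2 * (x * Real.exp (-x))) * (1 - Real.exp (-x) ^ 2) /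
        (1 - Real.exp (-x)) ^ 4) atTop (nhds 1) := by
    have h1 : Tendsto (fun x : ℝ =>
        (1 - Real.exp (-x) ^ 2 - 2 * (x * Real.exp (-x))) * (1 - Real.exp (-x) ^ 2))
        atTop (nhds 1) := by
      have := (((tendsto_const_nhds (x := (1:ℝ))).sub (hq.pow 2)).sub (hxq.const_mul 2)).mul
        ((tendsto_const_nhds (x := (1:ℝ))).sub (hq.pow 2))
      simpa using this
    have h2 : Tendsto (fun x : ℝ => (1 - Real.exp (-x)) ^ 4) atTop (nhds 1) := by
      have := ((tendsto_const_nhds (x := (1:ℝ))).sub hq).pow 4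
      simpa using this
    have := h1.div h2 (by norm_num)
    rw [div_one] at this; exact this
  refine haux.congr' ?_
  filter_upwards [eventually_gt_atTop (0:ℝ)] with x hx
  have hq1 : Real.exp (-x) < 1 := by
    rw [Real.exp_lt_one_iff]; linarith
  have hE : Real.exp x ≠ 0 := (Real.exp_pos x).ne'
  have hrec : Real.exp (-x) = (Real.exp x)⁻¹ := Real.exp_neg x
  have hc := cosh_sub_one_pos hx.ne'
  show (1 - Real.exp (-x) ^ 2 - 2 * (x * Real.exp (-x))) * (1 - Real.exp (-x) ^ 2) /
        (1 - Real.exp (-x)) ^ 4 = Wf x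
  rw [Wf, Real.sinh_eq, Real.cosh_eq, hrec]
  exact algtop2 (Real.exp x) x (Real.exp_pos x) (exp_ne_one_of_pos hx)


/-! ### The key algebraic identities showing the ODE is satisfied -/

lemma keyZ (t E : ℝ) (hE : 0 < E) (h1 : E ≠ 1) :
    (12 * ((E - E⁻¹) / 2 - t) * ((E + E⁻¹) / 2 - 1) * ((E + E⁻¹) / 2 - 1) ^ 3 -
        6 * ((E - E⁻¹) / 2 - t) ^ 2 * (3 * ((E + E⁻¹) / 2 - 1) ^ 2 * ((E - E⁻¹) / 2))) /
        (((E + E⁻¹) / 2 - 1) ^ 3) ^ 2 * (((E + E⁻¹) / 2 - 1)⁻¹ * ((E - E⁻¹) / 2 - t)) =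
      2 * (6 * ((E - E⁻¹) / 2 - t) ^ 2 / ((E + E⁻¹) / 2 - 1) ^ 3) -
        3 * (6 * ((E - E⁻¹) / 2 - t) ^ 2 / ((E + E⁻¹) / 2 - 1) ^ 3) *
          (((E - E⁻¹) / 2 - t) * ((E - E⁻¹) / 2) / ((E + E⁻¹) / 2 - 1) ^ 2) := by
  have hE0 : E ≠ 0 := hE.ne'
  have h4 : E - 1 ≠ 0 := sub_ne_zero.2 h1
  have h2 : (E + E⁻¹) / 2 - 1 = (E - 1) ^ 2 / (2 * E) := by field_simp; ring
  have h3 : (E - E⁻¹) / 2 = (E ^ 2 - 1) / (2 * E) := by field_simp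
  rw [h2, h3]
  field_simp
  ring

lemma keyW (t E : ℝ) (hE : 0 < E) (h1 : E ≠ 1) :
    ((((E + E⁻¹) / 2 - 1) * ((E - E⁻¹) / 2) +
          ((E - E⁻¹) / 2 - t) * ((E + E⁻¹) / 2)) * ((E + E⁻¹) / 2 - 1) ^ 2 -
        ((E - E⁻¹) / 2 - t) * ((E - E⁻¹) / 2) *
          (2 * ((E + E⁻¹) / 2 - 1) * ((E - E⁻¹) / 2))) /
        (((E + E⁻¹) / 2 - 1) ^ 2) ^ 2 * (((E + E⁻¹) / 2 - 1)⁻¹ * ((E - E⁻¹) / 2 - t)) =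
      -(1 / 6) * (6 * ((E - E⁻¹) / 2 - t) ^ 2 / ((E + E⁻¹) / 2 - 1) ^ 3) +
        ((E - E⁻¹) / 2 - t) * ((E - E⁻¹) / 2) / ((E + E⁻¹) / 2 - 1) ^ 2 -
        (((E - E⁻¹) / 2 - t) * ((E - E⁻¹) / 2) / ((E + E⁻¹) / 2 - 1) ^ 2) ^ 2 := by
  have hE0 : E ≠ 0 := hE.ne'
  have h4 : E - 1 ≠ 0 := sub_ne_zero.2 h1
  have h2 : (E + E⁻¹) / 2 - 1 = (E - 1) ^ 2 / (2 * E) := by field_simp; ring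
  have h3 : (E - E⁻¹) / 2 = (E ^ 2 - 1) / (2 * E) := by field_simp
  rw [h2, h3]
  field_simp
  ring

lemma u_hasDerivAt (τ : ℝ) :
    HasDerivAt (fun t => (Zf (etaf t), Wf (etaf t)))
      (F1 (Zf (etaf τ), Wf (etaf τ))) τ := by
  have hx : 0 < etaf τ := etaf_pos τ
  have hZ := (Zf_hasDerivAt hx).comp τ (etaf_hasDerivAt τ)
  have hW := (Wf_hasDerivAt hx).comp τ (etaf_hasDerivAt τ)
  have hpair := hZ.prodMk hW
  convert hpair using 1
  · rfl
  have hexp : Real.exp τ = Real.sinh (etaf τ) - etaf τ := (etaf_eq τ).symm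
  set x := etaf τ with hxdef
  have hE : 0 < Real.exp x := Real.exp_pos x
  have hE1 : Real.exp x ≠ 1 := exp_ne_one_of_pos hx
  rw [F1, Zf, Wf, hexp]
  simp only [Function.comp]
  apply Prod.ext
  · show 2 * (6 * (Real.sinh x - x) ^ 2 / (Real.cosh x - 1) ^ 3) -
        3 * (6 * (Real.sinh x - x) ^ 2 / (Real.cosh x - 1) ^ 3) *
          ((Real.sinh x - x) * Real.sinh x / (Real.cosh x - 1) ^ 2) = _
    rw [Real.sinh_eq, Real.cosh_eq, Real.exp_neg]
    exact (keyZ x (Real.exp x) hE hE1).symm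
  · show -(1 / 6) * (6 * (Real.sinh x - x) ^ 2 / (Real.cosh x - 1) ^ 3) +
        (Real.sinh x - x) * Real.sinh x / (Real.cosh x - 1) ^ 2 -
        ((Real.sinh x - x) * Real.sinh x / (Real.cosh x - 1) ^ 2) ^ 2 = _
    rw [Real.sinh_eq, Real.cosh_eq, Real.exp_neg]
    exact (keyW x (Real.exp x) hE hE1).symm


theorem exists_heteroclinic_SM2_to_M2 :
    ∃ u : ℝ → ℝ × ℝ,
      ContDiff ℝ 1 u ∧
      (∀ τ : ℝ, HasDerivAt u (F1 (u τ)) τ) ∧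
      Tendsto u atBot (nhds ((4 / 3 : ℝ), (2 / 3 : ℝ))) ∧
      Tendsto u atTop (nhds ((0 : ℝ), (1 : ℝ))) ∧
      ∀ τ : ℝ, u τ ≠ (4 / 3, 2 / 3) ∧ u τ ≠ (0, 1) := by
  refine ⟨fun τ => (Zf (etaf τ), Wf (etaf τ)), ?_, u_hasDerivAt, ?_, ?_, ?_⟩
  · -- `C¹` regularity
    have hdiff : Differentiable ℝ fun τ => (Zf (etaf τ), Wf (etaf τ)) :=
      fun τ => (u_hasDerivAt τ).differentiableAt
    rw [contDiff_one_iff_deriv]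
    refine ⟨hdiff, ?_⟩
    have hdeq : (deriv fun τ => (Zf (etaf τ), Wf (etaf τ))) =
        fun τ => F1 (Zf (etaf τ), Wf (etaf τ)) :=
      funext fun τ => (u_hasDerivAt τ).deriv
    rw [hdeq]
    have hF1 : Continuous F1 := by unfold F1; fun_prop
    exact hF1.comp hdiff.continuous
  · -- limit at `-∞`
    exact (limZ0.comp etaf_tendsto_atBot).prodMk_nhds (limW0.comp etaf_tendsto_atBot)
  · -- limit at `+∞`
    exact (limZtop.comp etaf_tendsto_atTop).prodMk_nhds (limWtop.comp etaf_tendsto_atTop)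
  · -- the orbit avoids both rest points
    intro τ
    have hx : 0 < etaf τ := etaf_pos τ
    set x := etaf τ with hxdef
    have hc : 0 < Real.cosh x - 1 := cosh_sub_one_pos hx.ne'
    have hs : 0 < Real.sinh x := Real.sinh_pos_iff.mpr hx
    have hP : 0 < Real.sinh x - x := by
      have := Real.self_lt_sinh_iff.mpr hx; linarith
    constructor
    · intro h
      rw [Prod.ext_iff] at h
      obtain ⟨h1, h2⟩ := h
      simp only at h1 h2
      rw [Zf, div_eq_iff (by positivity : (Real.cosh x - 1) ^ 3 ≠ 0)] at h1
      rw [Wf, div_eq_iff (by positivity : (Real.cosh x - 1) ^ 2 ≠ 0)] at h2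
      have hpy := Real.cosh_sq x
      have e2sq : ((Real.sinh x - x) * Real.sinh x) ^ 2 =
          (2 / 3 * (Real.cosh x - 1) ^ 2) ^ 2 := by rw [h2]
      have e4 : (Real.cosh x - 1) ^ 3 * (Real.sinh x ^ 2 - 2 * (Real.cosh x - 1)) = 0 := by
        linear_combination (-(3 / 4) * Real.sinh x ^ 2) * h1 + (9 / 2) * e2sq
      have e5 : Real.sinh x ^ 2 - 2 * (Real.cosh x - 1) = 0 := by
        rcases mul_eq_zero.mp e4 with h | h
        · exact absurd h (by positivity)
        · exact h
      nlinarith [mul_pos hc hc]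
    · intro h
      rw [Prod.ext_iff] at h
      obtain ⟨h1, h2⟩ := h
      simp only at h1 h2
      rw [Zf] at h1
      have : (0:ℝ) < 6 * (Real.sinh x - x) ^ 2 / (Real.cosh x - 1) ^ 3 := by positivity
      rw [h1] at this
      exact lt_irrefl 0 this
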